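/- Let 1 < p < ∞, let φ be a non-negative function with φ ∈ L^1(0,∞), and let 0 < ε < 1. If there is a constant N ≥ 0 such that ‖H_{α,β,φ} f‖_{L^p(ℝ,A_{α,β})} ≤ N · ‖f‖_{L^p(ℝ,A_{α,β})} for every f ∈ L^p(ℝ, A_{α,β}), then N ≥ ε^ε · ∫_0^{1/ε} (φ(t)/t) · t^{1/p+ε} · (inf_{x ∈ ℝ, x ≠ 0} A_{α,β}(x)/A_{α,β}(tx))^{1-1/p} dt. -/

import Mathlib

open MeasureTheory Set ENNReal

/-- The weight `A_{α,β}(x) = (sinh|x|)^{2α+1} (cosh|x|)^{2β+1}`. -/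
noncomputable def Aw (α β : ℝ) (x : ℝ) : ℝ :=
  Real.sinh |x| ^ (2 * α + 1) * Real.cosh |x| ^ (2 * β + 1)

/-- The Hausdorff operator associated with the Opdam–Cherednik transform. -/
noncomputable def Hop (α β : ℝ) (φ f : ℝ → ℝ) (x : ℝ) : ℝ :=
  ∫ t in Set.Ioi (0 : ℝ), (φ t / t) * f (x / t) * (Aw α β (x / t) / Aw α β x)

/-- The `L^p(I, A_{α,β})` norm, as an extended nonnegative real. -/
noncomputable def lpN (α β p : ℝ) (I : Set ℝ) (f : ℝ → ℝ) : ℝ≥0∞ :=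
  (∫⁻ x in I, ENNReal.ofReal (|f x| ^ p * Aw α β x)) ^ (1 / p)

lemma Aw_nonneg (α β x : ℝ) : 0 ≤ Aw α β x :=
  mul_nonneg (Real.rpow_nonneg (Real.sinh_nonneg_iff.2 (abs_nonneg x)) _)
    (Real.rpow_nonneg (Real.cosh_pos _).le _)

lemma Aw_pos (α β : ℝ) {x : ℝ} (hx : x ≠ 0) : 0 < Aw α β x :=
  mul_pos (Real.rpow_pos_of_pos (Real.sinh_pos_iff.2 (abs_pos.2 hx)) _)
    (Real.rpow_pos_of_pos (Real.cosh_pos _) _)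

lemma Aw_mono (α β : ℝ) (hα : -(1/2:ℝ) < α) (hβ : -(1/2:ℝ) ≤ β) {x y : ℝ}
    (h : |x| ≤ |y|) : Aw α β x ≤ Aw α β y := by
  have h1 : Real.sinh |x| ≤ Real.sinh |y| := Real.sinh_le_sinh.2 h
  have h2 : Real.cosh |x| ≤ Real.cosh |y| := Real.cosh_le_cosh.2 (by rwa [abs_abs, abs_abs])
  exact mul_le_mul (Real.rpow_le_rpow (Real.sinh_nonneg_iff.2 (abs_nonneg x)) h1 (by linarith))
    (Real.rpow_le_rpow (Real.cosh_pos _).le h2 (by linarith))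
    (Real.rpow_nonneg (Real.cosh_pos _).le _)
    (Real.rpow_nonneg (Real.sinh_nonneg_iff.2 (abs_nonneg y)) _)

lemma Aw_measurable (α β : ℝ) : Measurable (Aw α β) := by
  have h1 : Continuous fun x : ℝ => Real.sinh |x| := Real.continuous_sinh.comp continuous_abs
  have h2 : Continuous fun x : ℝ => Real.cosh |x| := Real.continuous_cosh.comp continuous_abs
  exact ((h1.measurable.pow measurable_const).mul (h2.measurable.pow measurable_const))

instance : Nonempty {u : ℝ // u ≠ 0} := ⟨⟨1, one_ne_zero⟩⟩

noncomputable def cF (α β t : ℝ) : ℝ :=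
  ⨅ u : {u : ℝ // u ≠ 0}, Aw α β u.1 / Aw α β (t * u.1)

lemma cF_nonneg (α β t : ℝ) : 0 ≤ cF α β t :=
  le_ciInf fun _ => div_nonneg (Aw_nonneg _ _ _) (Aw_nonneg _ _ _)

lemma cF_le (α β t : ℝ) {u : ℝ} (hu : u ≠ 0) :
    cF α β t ≤ Aw α β u / Aw α β (t * u) :=
  ciInf_le ⟨0, by rintro y ⟨v, rfl⟩; exact div_nonneg (Aw_nonneg _ _ _) (Aw_nonneg _ _ _)⟩
    (⟨u, hu⟩ : {u : ℝ // u ≠ 0})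

lemma lintegral_le_iSup_iUnion {f : ℝ → ℝ≥0∞} {A : ℕ → Set ℝ}
    (hA : ∀ n, MeasurableSet (A n)) (hmono : Monotone A) {B : Set ℝ}
    (hU : B ⊆ ⋃ n, A n) : ∫⁻ x in B, f x ≤ ⨆ n, ∫⁻ x in A n, f x := by
  obtain ⟨g, gmeas, gle, geq⟩ := exists_measurable_le_lintegral_eq (volume.restrict B) f
  calc ∫⁻ x in B, f x = ∫⁻ x in B, g x := geq
    _ ≤ ∫⁻ x in ⋃ n, A n, g x := lintegral_mono' (Measure.restrict_mono hU le_rfl) le_rfl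
    _ = volume.withDensity g (⋃ n, A n) := (withDensity_apply g (MeasurableSet.iUnion hA)).symm
    _ = ⨆ n, volume.withDensity g (A n) := hmono.measure_iUnion
    _ = ⨆ n, ∫⁻ x in A n, g x := by simp_rw [withDensity_apply g (hA _)]
    _ ≤ ⨆ n, ∫⁻ x in A n, f x := iSup_mono fun n => lintegral_mono gle

lemma lint_abs_rpow (a c : ℝ) (ha : 0 < a) (hc : 0 < c) :
    ∫⁻ x in {x : ℝ | a ≤ |x|}, ENNReal.ofReal (|x| ^ (-(1+c)))
      = ENNReal.ofReal (2 * a ^ (-c) / c) := by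
  set F : ℝ → ℝ := (Ici a).indicator (fun t => t ^ (-(1+c))) with hF
  have hFint : Integrable F := by
    rw [hF, integrable_indicator_iff measurableSet_Ici]
    exact (integrableOn_Ici_iff_integrableOn_Ioi).2 (integrableOn_Ioi_rpow_of_lt (by linarith) ha)
  have hIoi : IntegrableOn (fun x : ℝ => F |x|) (Ioi 0) := by
    apply (hFint.integrableOn (s := Ioi 0)).congr_fun _ measurableSet_Ioi
    exact fun x hx => by rw [abs_of_pos hx]
  have hIic : IntegrableOn (fun x : ℝ => F |x|) (Iic 0) := by
    rw [IntegrableOn, ← Measure.map_neg_eq_self (volume : Measure ℝ)]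
    have m : MeasurableEmbedding fun x : ℝ => -x := (Homeomorph.neg ℝ).measurableEmbedding
    rw [Measure.restrict_map m.measurable measurableSet_Iic, m.integrable_map_iff]
    simp only [Function.comp_def, abs_neg, neg_preimage, neg_Iic, neg_zero]
    exact (integrableOn_Ici_iff_integrableOn_Ioi).mpr hIoi
  have hgint : Integrable (fun x : ℝ => F |x|) := by
    rw [← integrableOn_univ, ← Iic_union_Ioi (a := (0:ℝ))]
    exact hIic.union hIoi
  have hgnn : 0 ≤ᵐ[volume] fun x : ℝ => F |x| := by
    refine Filter.Eventually.of_forall fun x => ?_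
    exact Set.indicator_nonneg (fun t ht => Real.rpow_nonneg (le_trans ha.le ht) _) _
  have hS : MeasurableSet {x : ℝ | a ≤ |x|} := by
    have : {x : ℝ | a ≤ |x|} = abs ⁻¹' Ici a := rfl
    rw [this]; exact continuous_abs.measurable measurableSet_Ici
  have h1 : ∀ x : ℝ, ({x : ℝ | a ≤ |x|}).indicator
      (fun x => ENNReal.ofReal (|x| ^ (-(1+c)))) x = ENNReal.ofReal (F |x|) := by
    intro x
    by_cases h : a ≤ |x| <;>
      simp [Set.indicator_apply, h, hF, mem_setOf_eq]
  calc ∫⁻ x in {x : ℝ | a ≤ |x|}, ENNReal.ofReal (|x| ^ (-(1+c)))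
      = ∫⁻ x, ({x : ℝ | a ≤ |x|}).indicator (fun x => ENNReal.ofReal (|x| ^ (-(1+c)))) x := by
        exact (lintegral_indicator hS (fun x : ℝ => ENNReal.ofReal (|x| ^ (-(1+c))))).symm
    _ = ∫⁻ x, ENNReal.ofReal (F |x|) := by simp_rw [h1]
    _ = ENNReal.ofReal (∫ x, F |x|) := (ofReal_integral_eq_lintegral_ofReal hgint hgnn).symm
    _ = ENNReal.ofReal (2 * ∫ x in Ioi (0:ℝ), F x) := by rw [integral_comp_abs (f := F)]
    _ = ENNReal.ofReal (2 * a ^ (-c) / c) := by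
        have hinter : Ici a ∩ Ioi (0:ℝ) = Ici a :=
          Set.inter_eq_left.2 (fun x hx => lt_of_lt_of_le ha hx)
        rw [hF, integral_indicator measurableSet_Ici, Measure.restrict_restrict measurableSet_Ici,
          hinter, integral_Ici_eq_integral_Ioi, integral_Ioi_rpow_of_lt (by linarith) ha]
        rw [show -(1+c)+1 = -c by ring, neg_div, div_neg, neg_neg, mul_div_assoc]

lemma weight_eq (α β p ε : ℝ) (hp : 1 < p) {x : ℝ} (hx : x ≠ 0) (D : ℝ) (hD : 0 ≤ D) :
    (D * (Aw α β x ^ (-(1/p)) * |x| ^ (-(1/p+ε)))) ^ p * Aw α β x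
      = D ^ p * |x| ^ (-(1+p*ε)) := by
  have hA : 0 < Aw α β x := Aw_pos α β hx
  have hX : 0 < |x| := abs_pos.2 hx
  have hp0 : (0:ℝ) < p := by linarith
  have h1 : (Aw α β x ^ (-(1/p))) ^ p = (Aw α β x)⁻¹ := by
    rw [← Real.rpow_mul hA.le, show -(1/p) * p = -1 by field_simp]
    exact Real.rpow_neg_one _
  have h2 : (|x| ^ (-(1/p+ε))) ^ p = |x| ^ (-(1+p*ε)) := by
    rw [← Real.rpow_mul hX.le]
    congr 1
    field_simp
  rw [Real.mul_rpow hD (by positivity), Real.mul_rpow (by positivity) (by positivity), h1, h2]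
  field_simp

set_option maxHeartbeats 1000000 in
lemma lemB (α β : ℝ) (hβ : -(1/2:ℝ) ≤ β) (hα : -(1/2:ℝ) < α)
    (p : ℝ) (hp : 1 < p)
    (φ : ℝ → ℝ) (hφpos : ∀ t, 0 ≤ φ t) (hφint : IntegrableOn φ (Set.Ioi 0))
    (ε : ℝ) (hε0 : 0 < ε) (hε1 : ε < 1)
    (N : ℝ) (hN : 0 ≤ N)
    (hbdd : ∀ f : ℝ → ℝ, Measurable f → lpN α β p Set.univ f < ⊤ →
      lpN α β p Set.univ (Hop α β φ f) ≤ ENNReal.ofReal N * lpN α β p Set.univ f)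
    (δ : ℝ) (hδ : 0 < δ) (hδb : δ < 1/ε)
    (C : ℝ) (hC0 : 0 ≤ C)
    (hC : ENNReal.ofReal C = ∫⁻ t in Set.Ioo δ (1/ε), ENNReal.ofReal
        ((φ t / t) * t ^ (1/p + ε) * (cF α β t) ^ (1 - 1/p)))
    (S : ℝ) (hS : 1/ε ≤ S) :
    ENNReal.ofReal (C ^ p) *
        ∫⁻ x in {x : ℝ | 1/ε ≤ |x| ∧ |x| ≤ S}, ENNReal.ofReal (|x| ^ (-(1+p*ε)))
      ≤ (ENNReal.ofReal N) ^ p * ENNReal.ofReal (2 / (p*ε)) := by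
  have hp0 : (0:ℝ) < p := by linarith
  have hb0 : (0:ℝ) < 1/ε := by positivity
  have hbS : (0:ℝ) < S := lt_of_lt_of_le hb0 hS
  set R : ℝ := S / δ with hRdef
  have hR0 : (0:ℝ) < R := by positivity
  set q : ℝ := 1/p + ε with hqdef
  have hq0 : (0:ℝ) < q := by positivity
  have hr0 : (0:ℝ) ≤ 1 - 1/p := by
    have : 1/p < 1 := by rw [div_lt_one hp0]; linarith
    linarith
  have hpε : (0:ℝ) < p * ε := by positivity
  set spt : Set ℝ := {x : ℝ | 1 ≤ |x| ∧ |x| ≤ R} with hsptdef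
  have hsptmeas : MeasurableSet spt := by
    have : spt = abs ⁻¹' Icc 1 R := rfl
    rw [this]; exact continuous_abs.measurable measurableSet_Icc
  set f : ℝ → ℝ := spt.indicator (fun x => Aw α β x ^ (-(1/p)) * |x| ^ (-q)) with hfdef
  have hfmeas : Measurable f := by
    apply Measurable.indicator _ hsptmeas
    exact ((Aw_measurable α β).pow measurable_const).mul
      (continuous_abs.measurable.pow measurable_const)
  have hf_nonneg : ∀ y, 0 ≤ f y := fun y =>
    Set.indicator_nonneg (fun z _ => mul_nonneg (Real.rpow_nonneg (Aw_nonneg _ _ _) _)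
      (Real.rpow_nonneg (abs_nonneg _) _)) y
  -- value of ∫ |f|^p Aw
  have hptws : ∀ x : ℝ, ENNReal.ofReal (|f x| ^ p * Aw α β x)
      = spt.indicator (fun x => ENNReal.ofReal (|x| ^ (-(1+p*ε)))) x := by
    intro x
    by_cases hx : x ∈ spt
    · have hx0 : x ≠ 0 := by
        intro h0
        have := hx.1
        rw [h0, abs_zero] at this; linarith
      rw [Set.indicator_of_mem hx, hfdef, Set.indicator_of_mem hx, abs_of_nonneg
        (mul_nonneg (Real.rpow_nonneg (Aw_nonneg _ _ _) _) (Real.rpow_nonneg (abs_nonneg _) _))]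
      have := weight_eq α β p ε hp hx0 1 zero_le_one
      rw [one_mul, Real.one_rpow, one_mul] at this
      rw [← hqdef] at this
      rw [this]
    · rw [Set.indicator_of_notMem hx, hfdef, Set.indicator_of_notMem hx, abs_zero,
        Real.zero_rpow hp0.ne', zero_mul, ofReal_zero]
  have hlpN_f : lpN α β p Set.univ f
      = (∫⁻ x in spt, ENNReal.ofReal (|x| ^ (-(1+p*ε)))) ^ (1/p) := by
    simp only [lpN, Measure.restrict_univ]
    congr 1
    calc ∫⁻ x, ENNReal.ofReal (|f x| ^ p * Aw α β x)
        = ∫⁻ x, spt.indicator (fun x => ENNReal.ofReal (|x| ^ (-(1+p*ε)))) x := by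
          simp_rw [hptws]
      _ = ∫⁻ x in spt, ENNReal.ofReal (|x| ^ (-(1+p*ε))) :=
          lintegral_indicator hsptmeas _
  have hIR_le : (∫⁻ x in spt, ENNReal.ofReal (|x| ^ (-(1+p*ε)))) ≤ ENNReal.ofReal (2/(p*ε)) := by
    have hsub : spt ⊆ {x : ℝ | 1 ≤ |x|} := fun x hx => hx.1
    calc (∫⁻ x in spt, ENNReal.ofReal (|x| ^ (-(1+p*ε))))
        ≤ ∫⁻ x in {x : ℝ | 1 ≤ |x|}, ENNReal.ofReal (|x| ^ (-(1+p*ε))) :=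
          lintegral_mono_set hsub
      _ = ENNReal.ofReal (2 * (1:ℝ) ^ (-(p*ε)) / (p*ε)) := lint_abs_rpow 1 (p*ε) one_pos hpε
      _ = ENNReal.ofReal (2/(p*ε)) := by rw [Real.one_rpow, mul_one]
  have hlpN_lt : lpN α β p Set.univ f < ⊤ := by
    rw [hlpN_f]
    exact ENNReal.rpow_lt_top_of_nonneg (by positivity)
      (lt_of_le_of_lt hIR_le ofReal_lt_top).ne
  have hbd := hbdd f hfmeas hlpN_lt
  -- power p of L^p norms
  have hlpN_pow : (lpN α β p Set.univ (Hop α β φ f)) ^ p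
      = ∫⁻ x, ENNReal.ofReal (|Hop α β φ f x| ^ p * Aw α β x) := by
    simp only [lpN, Measure.restrict_univ]
    rw [← ENNReal.rpow_mul, one_div, inv_mul_cancel₀ hp0.ne', ENNReal.rpow_one]
  have hfpow : (lpN α β p Set.univ f) ^ p
      = ∫⁻ x in spt, ENNReal.ofReal (|x| ^ (-(1+p*ε))) := by
    rw [hlpN_f, ← ENNReal.rpow_mul, one_div, inv_mul_cancel₀ hp0.ne', ENNReal.rpow_one]
  -- the core pointwise estimate
  have hX : MeasurableSet {x : ℝ | 1/ε ≤ |x| ∧ |x| ≤ S} := by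
    have : {x : ℝ | 1/ε ≤ |x| ∧ |x| ≤ S} = abs ⁻¹' Icc (1/ε) S := rfl
    rw [this]; exact continuous_abs.measurable measurableSet_Icc
  have claim : ∀ x ∈ {x : ℝ | 1/ε ≤ |x| ∧ |x| ≤ S},
      ENNReal.ofReal (C ^ p * |x| ^ (-(1+p*ε)))
        ≤ ENNReal.ofReal (|Hop α β φ f x| ^ p * Aw α β x) := by
    intro x hx
    obtain ⟨hxb, hxS⟩ := hx
    have hx0 : x ≠ 0 := by
      intro h0; rw [h0, abs_zero] at hxb; linarith
    have hxpos : 0 < |x| := abs_pos.2 hx0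
    have hAx : 0 < Aw α β x := Aw_pos α β hx0
    set h : ℝ → ℝ := fun t => (φ t / t) * f (x / t) * (Aw α β (x / t) / Aw α β x) with hhdef
    have hHop : Hop α β φ f x = ∫ t in Ioi (0:ℝ), h t := rfl
    have h_nonneg : ∀ t ∈ Ioi (0:ℝ), 0 ≤ h t := by
      intro t ht
      exact mul_nonneg (mul_nonneg (div_nonneg (hφpos t) (le_of_lt ht)) (hf_nonneg _))
        (div_nonneg (Aw_nonneg _ _ _) (Aw_nonneg _ _ _))
    have hm0 : AEStronglyMeasurable (fun t : ℝ => φ t / t) (volume.restrict (Ioi 0)) := by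
      simp only [div_eq_mul_inv]
      exact hφint.aestronglyMeasurable.mul measurable_inv.aestronglyMeasurable
    have hmf : Measurable fun t : ℝ => f (x / t) :=
      hfmeas.comp (measurable_const.div measurable_id)
    have hmA : Measurable fun t : ℝ => Aw α β (x / t) / Aw α β x :=
      ((Aw_measurable α β).comp (measurable_const.div measurable_id)).div_const _
    have h_meas : AEStronglyMeasurable h (volume.restrict (Ioi 0)) :=
      (hm0.mul hmf.aestronglyMeasurable).mul hmA.aestronglyMeasurable
    set K1 : ℝ := R / |x| * Aw α β R ^ (1 - 1/p) / Aw α β x with hK1def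
    have hK1 : 0 ≤ K1 := by
      apply div_nonneg _ (Aw_nonneg _ _ _)
      exact mul_nonneg (div_nonneg hR0.le (abs_nonneg x)) (Real.rpow_nonneg (Aw_nonneg _ _ _) _)
    have h_bound : ∀ t ∈ Ioi (0:ℝ), ‖h t‖ ≤ K1 * φ t := by
      intro t ht
      rw [Real.norm_eq_abs, abs_of_nonneg (h_nonneg t ht)]
      have ht0 : (0:ℝ) < t := ht
      by_cases hmem : x / t ∈ spt
      · have hm1 := hmem.1
        have hm2 := hmem.2
        have hxt0 : x / t ≠ 0 := by
          intro h0; rw [h0, abs_zero] at hm1; linarith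
        have hAxt : 0 < Aw α β (x/t) := Aw_pos α β hxt0
        have hcomb : Aw α β (x/t) ^ (-(1/p)) * Aw α β (x/t) = Aw α β (x/t) ^ ((1:ℝ) - 1/p) := by
          rw [show (1:ℝ) - 1/p = -(1/p) + 1 by ring, Real.rpow_add hAxt, Real.rpow_one]
        have b1 : 1/t ≤ R/|x| := by
          rw [div_le_div_iff₀ ht0 hxpos, one_mul]
          have : |x| / t ≤ R := by rwa [abs_div, abs_of_pos ht0] at hm2
          linarith [(div_le_iff₀ ht0).1 this]
        have b2 : |x/t| ^ (-q) ≤ 1 :=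
          Real.rpow_le_one_of_one_le_of_nonpos hm1 (by linarith)
        have b3 : Aw α β (x/t) ^ ((1:ℝ) - 1/p) ≤ Aw α β R ^ ((1:ℝ) - 1/p) := by
          apply Real.rpow_le_rpow (Aw_nonneg _ _ _) _ hr0
          apply Aw_mono α β hα hβ
          rwa [abs_of_pos hR0]
        rw [hhdef]
        simp only
        rw [hfdef, Set.indicator_of_mem hmem]
        have e : φ t / t * (Aw α β (x/t) ^ (-(1/p)) * |x/t| ^ (-q)) * (Aw α β (x/t) / Aw α β x)
            = φ t * ((1/t) * ((Aw α β (x/t) ^ (-(1/p)) * Aw α β (x/t)) * |x/t| ^ (-q))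
                * (Aw α β x)⁻¹) := by
          field_simp
        rw [e, hcomb]
        have e2 : K1 * φ t = φ t * ((R/|x|) * (Aw α β R ^ ((1:ℝ) - 1/p) * 1) * (Aw α β x)⁻¹) := by
          rw [hK1def]; ring
        rw [e2]
        have hAxinv : (0:ℝ) ≤ (Aw α β x)⁻¹ := inv_nonneg.2 (Aw_nonneg _ _ _)
        apply mul_le_mul_of_nonneg_left _ (hφpos t)
        apply mul_le_mul_of_nonneg_right _ hAxinv
        apply mul_le_mul b1 _ _ (div_nonneg hR0.le (abs_nonneg x))
        · exact mul_le_mul b3 b2 (Real.rpow_nonneg (abs_nonneg _) _)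
            (Real.rpow_nonneg (Aw_nonneg _ _ _) _)
        · exact mul_nonneg (Real.rpow_nonneg (Aw_nonneg _ _ _) _)
            (Real.rpow_nonneg (abs_nonneg _) _)
      · rw [hhdef]
        simp only
        rw [hfdef, Set.indicator_of_notMem hmem, mul_zero, zero_mul]
        exact mul_nonneg hK1 (hφpos t)
    have h_int : Integrable h (volume.restrict (Ioi 0)) := by
      apply Integrable.mono' (hφint.const_mul K1) h_meas
      exact (ae_restrict_iff' measurableSet_Ioi).2 (Filter.Eventually.of_forall h_bound)
    have h_ofReal : ENNReal.ofReal (Hop α β φ f x) = ∫⁻ t in Ioi (0:ℝ), ENNReal.ofReal (h t) := by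
      rw [hHop]
      exact ofReal_integral_eq_lintegral_ofReal h_int
        ((ae_restrict_iff' measurableSet_Ioi).2 (Filter.Eventually.of_forall h_nonneg))
    set coef : ℝ := Aw α β x ^ (-(1/p)) * |x| ^ (-q) with hcoefdef
    have hcoef0 : 0 ≤ coef :=
      mul_nonneg (Real.rpow_nonneg (Aw_nonneg _ _ _) _) (Real.rpow_nonneg (abs_nonneg _) _)
    have hlow : ∀ t ∈ Ioo δ (1/ε),
        ENNReal.ofReal (coef * ((φ t / t) * t ^ q * (cF α β t) ^ (1 - 1/p)))
          ≤ ENNReal.ofReal (h t) := by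
      intro t ht
      obtain ⟨htδ, htb⟩ := ht
      have ht0 : (0:ℝ) < t := lt_trans hδ htδ
      have habs : |x/t| = |x|/t := by rw [abs_div, abs_of_pos ht0]
      have hmem : x/t ∈ spt := by
        constructor
        · rw [habs, le_div_iff₀ ht0, one_mul]
          exact le_trans (le_of_lt htb) hxb
        · rw [habs, hRdef]
          exact div_le_div₀ hbS.le hxS hδ htδ.le
      have hxt0 : x/t ≠ 0 := by
        intro h0
        have := hmem.1
        rw [h0, abs_zero] at this; linarith
      have hAxt : 0 < Aw α β (x/t) := Aw_pos α β hxt0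
      apply ofReal_le_ofReal
      have habsq : |x/t| ^ (-q) = |x| ^ (-q) * t ^ q := by
        rw [habs, div_eq_mul_inv, Real.mul_rpow (abs_nonneg x) (inv_nonneg.2 ht0.le),
          Real.inv_rpow ht0.le, ← Real.rpow_neg ht0.le, neg_neg]
      have c1 : Aw α β (x/t) ^ ((1:ℝ) - 1/p) = Aw α β (x/t) ^ (-(1/p)) * Aw α β (x/t) := by
        rw [show (1:ℝ) - 1/p = -(1/p) + 1 by ring, Real.rpow_add hAxt, Real.rpow_one]
      have c2 : Aw α β x ^ ((1:ℝ) - 1/p) = Aw α β x ^ (-(1/p)) * Aw α β x := by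
        rw [show (1:ℝ) - 1/p = -(1/p) + 1 by ring, Real.rpow_add hAx, Real.rpow_one]
      have E : h t = coef * ((φ t / t) * t ^ q * (Aw α β (x/t) / Aw α β x) ^ ((1:ℝ) - 1/p)) := by
        rw [hhdef]
        simp only
        rw [hfdef, Set.indicator_of_mem hmem, habsq,
          Real.div_rpow (Aw_nonneg _ _ _) (Aw_nonneg _ _ _), c1, c2, hcoefdef]
        have hb1 : Aw α β x ^ (-(1/p)) ≠ 0 :=
          (Real.rpow_pos_of_pos hAx _).ne'
        field_simp
      rw [E]
      have hinf : cF α β t ≤ Aw α β (x/t) / Aw α β x := by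
        have := cF_le α β t hxt0
        rwa [mul_div_cancel₀ _ ht0.ne'] at this
      have hrle : (cF α β t) ^ ((1:ℝ) - 1/p) ≤ (Aw α β (x/t) / Aw α β x) ^ ((1:ℝ) - 1/p) :=
        Real.rpow_le_rpow (cF_nonneg α β t) hinf hr0
      apply mul_le_mul_of_nonneg_left _ hcoef0
      apply mul_le_mul_of_nonneg_left _ (mul_nonneg (div_nonneg (hφpos t) ht0.le)
        (Real.rpow_nonneg ht0.le _))
      exact hrle
    -- combine
    have step : ENNReal.ofReal coef * ENNReal.ofReal C ≤ ENNReal.ofReal (Hop α β φ f x) := by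
      rw [hC, h_ofReal]
      calc ENNReal.ofReal coef * ∫⁻ t in Ioo δ (1/ε), ENNReal.ofReal
            ((φ t / t) * t ^ (1/p + ε) * (cF α β t) ^ (1 - 1/p))
          = ∫⁻ t in Ioo δ (1/ε), ENNReal.ofReal coef * ENNReal.ofReal
            ((φ t / t) * t ^ (1/p + ε) * (cF α β t) ^ (1 - 1/p)) :=
            (lintegral_const_mul' _ _ ofReal_ne_top).symm
        _ = ∫⁻ t in Ioo δ (1/ε), ENNReal.ofReal
            (coef * ((φ t / t) * t ^ q * (cF α β t) ^ (1 - 1/p))) := by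
            congr 1
            ext t
            rw [← ENNReal.ofReal_mul hcoef0, hqdef]
        _ ≤ ∫⁻ t in Ioo δ (1/ε), ENNReal.ofReal (h t) :=
            setLIntegral_mono' measurableSet_Ioo hlow
        _ ≤ ∫⁻ t in Ioi (0:ℝ), ENNReal.ofReal (h t) :=
            lintegral_mono_set (fun t ht => lt_trans hδ ht.1)
    have hHnn : 0 ≤ Hop α β φ f x := by
      rw [hHop]
      exact setIntegral_nonneg measurableSet_Ioi h_nonneg
    have hreal : coef * C ≤ Hop α β φ f x := by
      rw [← ENNReal.ofReal_mul hcoef0] at step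
      exact (ENNReal.ofReal_le_ofReal_iff hHnn).1 step
    apply ofReal_le_ofReal
    have h1 : coef * C ≤ |Hop α β φ f x| := le_trans hreal (le_abs_self _)
    have h2 : (coef * C) ^ p ≤ |Hop α β φ f x| ^ p :=
      Real.rpow_le_rpow (mul_nonneg hcoef0 hC0) h1 hp0.le
    have h3 : (coef * C) ^ p * Aw α β x = C ^ p * |x| ^ (-(1+p*ε)) := by
      rw [mul_comm coef C, hcoefdef, hqdef]
      exact weight_eq α β p ε hp hx0 C hC0
    calc C ^ p * |x| ^ (-(1+p*ε)) = (coef * C) ^ p * Aw α β x := h3.symm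
      _ ≤ |Hop α β φ f x| ^ p * Aw α β x :=
          mul_le_mul_of_nonneg_right h2 (Aw_nonneg _ _ _)
  -- assemble
  calc ENNReal.ofReal (C ^ p) *
        ∫⁻ x in {x : ℝ | 1/ε ≤ |x| ∧ |x| ≤ S}, ENNReal.ofReal (|x| ^ (-(1+p*ε)))
      = ∫⁻ x in {x : ℝ | 1/ε ≤ |x| ∧ |x| ≤ S},
          ENNReal.ofReal (C ^ p * |x| ^ (-(1+p*ε))) := by
        rw [← lintegral_const_mul' _ _ ofReal_ne_top]
        congr 1
        ext x
        rw [← ENNReal.ofReal_mul (by positivity)]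
    _ ≤ ∫⁻ x in {x : ℝ | 1/ε ≤ |x| ∧ |x| ≤ S},
          ENNReal.ofReal (|Hop α β φ f x| ^ p * Aw α β x) :=
        setLIntegral_mono' hX claim
    _ ≤ ∫⁻ x, ENNReal.ofReal (|Hop α β φ f x| ^ p * Aw α β x) :=
        setLIntegral_le_lintegral _ _
    _ = (lpN α β p Set.univ (Hop α β φ f)) ^ p := hlpN_pow.symm
    _ ≤ (ENNReal.ofReal N * lpN α β p Set.univ f) ^ p :=
        ENNReal.rpow_le_rpow hbd hp0.le
    _ = (ENNReal.ofReal N) ^ p * (lpN α β p Set.univ f) ^ p :=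
        ENNReal.mul_rpow_of_nonneg _ _ hp0.le
    _ ≤ (ENNReal.ofReal N) ^ p * ENNReal.ofReal (2/(p*ε)) := by
        rw [hfpow]
        exact mul_le_mul_right hIR_le _

set_option maxHeartbeats 1000000 in
lemma lemA (α β : ℝ) (hβ : -(1/2:ℝ) ≤ β) (hα : -(1/2:ℝ) < α)
    (p : ℝ) (hp : 1 < p)
    (φ : ℝ → ℝ) (hφpos : ∀ t, 0 ≤ φ t) (hφint : IntegrableOn φ (Set.Ioi 0))
    (ε : ℝ) (hε0 : 0 < ε) (hε1 : ε < 1)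
    (N : ℝ) (hN : 0 ≤ N)
    (hbdd : ∀ f : ℝ → ℝ, Measurable f → lpN α β p Set.univ f < ⊤ →
      lpN α β p Set.univ (Hop α β φ f) ≤ ENNReal.ofReal N * lpN α β p Set.univ f)
    (δ : ℝ) (hδ : 0 < δ) :
    ENNReal.ofReal (ε ^ ε) * (∫⁻ t in Set.Ioo δ (1/ε), ENNReal.ofReal
        ((φ t / t) * t ^ (1/p + ε) * (cF α β t) ^ (1 - 1/p))) ≤ ENNReal.ofReal N := by
  by_cases hδb : δ < 1/ε
  swap
  · rw [Set.Ioo_eq_empty hδb, Measure.restrict_empty, lintegral_zero_measure, mul_zero]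
    exact bot_le
  have hp0 : (0:ℝ) < p := by linarith
  have hb0 : (0:ℝ) < 1/ε := by positivity
  have hq0 : (0:ℝ) < 1/p + ε := by positivity
  have hr0 : (0:ℝ) ≤ 1 - 1/p := by
    have : 1/p < 1 := by rw [div_lt_one hp0]; linarith
    linarith
  have hpε : (0:ℝ) < p * ε := by positivity
  have hAδ : 0 < Aw α β δ := Aw_pos α β hδ.ne'
  set K := ∫⁻ t in Set.Ioo δ (1/ε), ENNReal.ofReal
      ((φ t / t) * t ^ (1/p + ε) * (cF α β t) ^ (1 - 1/p)) with hKdef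
  -- K is finite
  set K0 : ℝ := (1/δ) * (1/ε) ^ (1/p + ε) * (Aw α β 1 / Aw α β δ) ^ (1 - 1/p) with hK0def
  have hK0 : 0 ≤ K0 := by
    apply mul_nonneg (mul_nonneg _ (Real.rpow_nonneg hb0.le _))
      (Real.rpow_nonneg (div_nonneg (Aw_nonneg _ _ _) (Aw_nonneg _ _ _)) _)
    positivity
  have hψle : ∀ t ∈ Set.Ioo δ (1/ε),
      ENNReal.ofReal ((φ t / t) * t ^ (1/p + ε) * (cF α β t) ^ (1 - 1/p))
        ≤ ENNReal.ofReal (K0 * φ t) := by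
    intro t ht
    obtain ⟨htδ, htb⟩ := ht
    have ht0 : (0:ℝ) < t := lt_trans hδ htδ
    apply ofReal_le_ofReal
    have hcF : cF α β t ≤ Aw α β 1 / Aw α β δ := by
      have h1 := cF_le α β t (one_ne_zero)
      rw [mul_one] at h1
      refine le_trans h1 ?_
      apply div_le_div_of_nonneg_left (Aw_nonneg _ _ _) hAδ
      apply Aw_mono α β hα hβ
      rw [abs_of_pos hδ, abs_of_pos ht0]
      exact htδ.le
    have e : K0 * φ t = (φ t / δ) * (1/ε) ^ (1/p + ε) * (Aw α β 1 / Aw α β δ) ^ (1 - 1/p) := by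
      rw [hK0def]; ring
    rw [e]
    have f1 : φ t / t ≤ φ t / δ := div_le_div_of_nonneg_left (hφpos t) hδ htδ.le
    have f2 : t ^ (1/p + ε) ≤ (1/ε) ^ (1/p + ε) :=
      Real.rpow_le_rpow ht0.le htb.le hq0.le
    have f3 : (cF α β t) ^ (1 - 1/p) ≤ (Aw α β 1 / Aw α β δ) ^ (1 - 1/p) :=
      Real.rpow_le_rpow (cF_nonneg α β t) hcF hr0
    apply mul_le_mul _ f3 (Real.rpow_nonneg (cF_nonneg α β t) _)
      (mul_nonneg (div_nonneg (hφpos t) hδ.le) (Real.rpow_nonneg hb0.le _))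
    exact mul_le_mul f1 f2 (Real.rpow_nonneg ht0.le _) (div_nonneg (hφpos t) hδ.le)
  have hKfin : K ≠ ⊤ := by
    have h1 : K ≤ ∫⁻ t in Set.Ioo δ (1/ε), ENNReal.ofReal (K0 * φ t) :=
      setLIntegral_mono' measurableSet_Ioo hψle
    have h2 : ∫⁻ t in Set.Ioo δ (1/ε), ENNReal.ofReal (K0 * φ t)
        = ENNReal.ofReal K0 * ∫⁻ t in Set.Ioo δ (1/ε), ENNReal.ofReal (φ t) := by
      rw [← lintegral_const_mul' _ _ ofReal_ne_top]
      congr 1; ext t; rw [← ENNReal.ofReal_mul hK0]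
    have h3 : ∫⁻ t in Set.Ioo δ (1/ε), ENNReal.ofReal (φ t)
        ≤ ∫⁻ t in Set.Ioi (0:ℝ), ENNReal.ofReal (φ t) :=
      lintegral_mono_set (fun t ht => lt_trans hδ ht.1)
    have h4 : ∫⁻ t in Set.Ioi (0:ℝ), ENNReal.ofReal (φ t) < ⊤ := hφint.lintegral_lt_top
    exact (lt_of_le_of_lt h1 (lt_of_le_of_lt (h2.le.trans
      (mul_le_mul_right h3 _)) (ENNReal.mul_lt_top ofReal_lt_top h4))).ne
  set C : ℝ := K.toReal with hCdef
  have hC0 : 0 ≤ C := ENNReal.toReal_nonneg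
  have hCK : ENNReal.ofReal C = K := ENNReal.ofReal_toReal hKfin
  -- apply lemB for each n and take sup
  set An : ℕ → Set ℝ := fun n => {x : ℝ | 1/ε ≤ |x| ∧ |x| ≤ 1/ε + n} with hAndef
  have hAmeas : ∀ n, MeasurableSet (An n) := by
    intro n
    have : An n = abs ⁻¹' Icc (1/ε) (1/ε + n) := rfl
    rw [this]; exact continuous_abs.measurable measurableSet_Icc
  have hmono : Monotone An := by
    intro m n hmn x hx
    refine ⟨hx.1, le_trans hx.2 ?_⟩
    have : (m:ℝ) ≤ n := Nat.cast_le.2 hmn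
    linarith
  have hBsub : {x : ℝ | 1/ε ≤ |x|} ⊆ ⋃ n, An n := by
    intro x hx
    obtain ⟨n, hn⟩ := exists_nat_ge (|x| - 1/ε)
    exact Set.mem_iUnion.2 ⟨n, hx, by linarith⟩
  have hB : ∀ n : ℕ, ENNReal.ofReal (C ^ p) *
      ∫⁻ x in An n, ENNReal.ofReal (|x| ^ (-(1+p*ε)))
        ≤ (ENNReal.ofReal N) ^ p * ENNReal.ofReal (2 / (p*ε)) := by
    intro n
    exact lemB α β hβ hα p hp φ hφpos hφint ε hε0 hε1 N hN hbdd δ hδ hδb C hC0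
      (by rw [hCK]) (1/ε + n) (by linarith [Nat.cast_nonneg (α := ℝ) n])
  have hmain : ENNReal.ofReal (C ^ p) *
      ∫⁻ x in {x : ℝ | 1/ε ≤ |x|}, ENNReal.ofReal (|x| ^ (-(1+p*ε)))
        ≤ (ENNReal.ofReal N) ^ p * ENNReal.ofReal (2 / (p*ε)) := by
    calc ENNReal.ofReal (C ^ p) *
        ∫⁻ x in {x : ℝ | 1/ε ≤ |x|}, ENNReal.ofReal (|x| ^ (-(1+p*ε)))
        ≤ ENNReal.ofReal (C ^ p) * ⨆ n, ∫⁻ x in An n, ENNReal.ofReal (|x| ^ (-(1+p*ε))) :=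
          mul_le_mul_right (lintegral_le_iSup_iUnion hAmeas hmono hBsub) _
      _ = ⨆ n, ENNReal.ofReal (C ^ p) * ∫⁻ x in An n, ENNReal.ofReal (|x| ^ (-(1+p*ε))) :=
          by rw [ENNReal.mul_iSup]
      _ ≤ (ENNReal.ofReal N) ^ p * ENNReal.ofReal (2 / (p*ε)) := iSup_le hB
  rw [lint_abs_rpow (1/ε) (p*ε) hb0 hpε] at hmain
  have hval : (2 * (1/ε) ^ (-(p*ε)) / (p*ε)) = ε ^ (p*ε) * (2 / (p*ε)) := by
    rw [one_div, Real.inv_rpow hε0.le, Real.rpow_neg hε0.le, inv_inv]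
    ring
  rw [hval, ENNReal.ofReal_mul (Real.rpow_nonneg hε0.le _), ← mul_assoc] at hmain
  have hcancel : ENNReal.ofReal (C ^ p) * ENNReal.ofReal (ε ^ (p*ε)) ≤ (ENNReal.ofReal N) ^ p :=
    (ENNReal.mul_le_mul_iff_left (ENNReal.ofReal_pos.2 (by positivity)).ne' ofReal_ne_top).1 hmain
  have hε2 : ε ^ (p*ε) = (ε ^ ε) ^ p := by
    rw [show p*ε = ε*p by ring, Real.rpow_mul hε0.le]
  rw [hε2, ← ENNReal.ofReal_rpow_of_nonneg hC0 hp0.le,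
    ← ENNReal.ofReal_rpow_of_nonneg (Real.rpow_nonneg hε0.le _) hp0.le,
    ← ENNReal.mul_rpow_of_nonneg _ _ hp0.le] at hcancel
  have hfinal : ENNReal.ofReal C * ENNReal.ofReal (ε ^ ε) ≤ ENNReal.ofReal N := by
    have h5 := ENNReal.rpow_le_rpow hcancel (by positivity : (0:ℝ) ≤ 1/p)
    rwa [← ENNReal.rpow_mul, ← ENNReal.rpow_mul, mul_one_div_cancel hp0.ne',
      ENNReal.rpow_one, ENNReal.rpow_one] at h5
  rw [← hCK, mul_comm]
  exact hfinal

/-- Lower bound for the operator norm of the Hausdorff operator on `L^p(ℝ, A_{α,β})` in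
terms of the truncated integral at level `ε`. -/
theorem hausdorff_Lp_lower_bound_eps (α β : ℝ) (hβα : β ≤ α) (hβ : -(1/2 : ℝ) ≤ β)
    (hα : -(1/2 : ℝ) < α)
    (p : ℝ) (hp : 1 < p)
    (φ : ℝ → ℝ) (hφpos : ∀ t, 0 ≤ φ t) (hφint : IntegrableOn φ (Set.Ioi 0))
    (ε : ℝ) (hε0 : 0 < ε) (hε1 : ε < 1)
    (N : ℝ) (hN : 0 ≤ N)
    (hbdd : ∀ f : ℝ → ℝ, Measurable f → lpN α β p Set.univ f < ⊤ →
      lpN α β p Set.univ (Hop α β φ f) ≤ ENNReal.ofReal N * lpN α β p Set.univ f) :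
    ENNReal.ofReal (ε ^ ε) *
      ∫⁻ t in Set.Ioo (0 : ℝ) (1/ε), ENNReal.ofReal
        ((φ t / t) * t ^ (1/p + ε) *
          (⨅ u : {u : ℝ // u ≠ 0}, Aw α β u.1 / Aw α β (t * u.1)) ^ (1 - 1/p)) ≤
      ENNReal.ofReal N := by
  set An : ℕ → Set ℝ := fun n => Set.Ioo (1/((n:ℝ)+1)) (1/ε) with hAndef
  have hAmeas : ∀ n, MeasurableSet (An n) := fun n => measurableSet_Ioo
  have hmono : Monotone An := by
    intro m n hmn x hx
    refine ⟨lt_of_le_of_lt ?_ hx.1, hx.2⟩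
    apply one_div_le_one_div_of_le (by positivity)
    have : (m:ℝ) ≤ n := Nat.cast_le.2 hmn
    linarith
  have hU : Set.Ioo (0:ℝ) (1/ε) ⊆ ⋃ n, An n := by
    intro x hx
    obtain ⟨n, hn⟩ := exists_nat_one_div_lt hx.1
    exact Set.mem_iUnion.2 ⟨n, hn, hx.2⟩
  calc ENNReal.ofReal (ε ^ ε) *
      ∫⁻ t in Set.Ioo (0 : ℝ) (1/ε), ENNReal.ofReal
        ((φ t / t) * t ^ (1/p + ε) * (cF α β t) ^ (1 - 1/p))
      ≤ ENNReal.ofReal (ε ^ ε) * ⨆ n, ∫⁻ t in An n, ENNReal.ofReal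
        ((φ t / t) * t ^ (1/p + ε) * (cF α β t) ^ (1 - 1/p)) :=
        mul_le_mul_right (lintegral_le_iSup_iUnion hAmeas hmono hU) _
    _ = ⨆ n, ENNReal.ofReal (ε ^ ε) * ∫⁻ t in An n, ENNReal.ofReal
        ((φ t / t) * t ^ (1/p + ε) * (cF α β t) ^ (1 - 1/p)) := by rw [ENNReal.mul_iSup]
    _ ≤ ENNReal.ofReal N := iSup_le fun n =>
        lemA α β hβ hα p hp φ hφpos hφint ε hε0 hε1 N hN hbdd (1/((n:ℝ)+1)) (by positivity)
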